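/- Let (V,g) be a Euclidean vector space and τ ∈ Λ³V with b(τ²) = 0, so that [X,Y] := τ_X Y is a Lie bracket making (V, [·,·], g) a metric Lie algebra. If ker τ = {X ∈ V : τ_X = 0} is zero, then this Lie algebra is semisimple, and the stabilizer algebra stab(τ) = {α ∈ so(V) : α_* τ = 0} equals the algebra of skew-symmetric derivations of (V,[·,·]); consequently stab(τ) = g_τ := ad(V), i.e. every element of stab(τ) is of the form τ_X for some X ∈ V. -/

import Mathlib

open scoped InnerProductSpace

private lemma trace_onb {V : Type*} [NormedAddCommGroup V] [InnerProductSpace ℝ V]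
    [FiniteDimensional ℝ V] (f : Module.End ℝ V) :
    LinearMap.trace ℝ V f =
      ∑ i, ⟪(stdOrthonormalBasis ℝ V) i, f ((stdOrthonormalBasis ℝ V) i)⟫_ℝ := by
  classical
  rw [LinearMap.trace_eq_matrix_trace ℝ (stdOrthonormalBasis ℝ V).toBasis f, Matrix.trace]
  simp [LinearMap.toMatrix_apply, Matrix.diag, OrthonormalBasis.coe_toBasis,
    OrthonormalBasis.coe_toBasis_repr_apply, OrthonormalBasis.repr_apply_apply]

private lemma inner_all_zero {V : Type*} [NormedAddCommGroup V] [InnerProductSpace ℝ V]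
    {v : V} (h : ∀ w, ⟪v, w⟫_ℝ = 0) : v = 0 := by
  have := h v
  rwa [real_inner_self_eq_norm_sq, pow_eq_zero_iff (n := 2) (by norm_num),
    norm_eq_zero] at this


/-- Let `(V,g)` be a Euclidean vector space and `τ ∈ Λ³V` (encoded via `B`
with `⟪B X Y, Z⟫ = τ(X,Y,Z)`) with `b(τ²) = 0`, so that `[X,Y] := τ_X Y = B X Y` is a Lie
bracket making `(V, [·,·], g)` a metric Lie algebra.  If `ker τ = 0`, then this Lie algebra
is semisimple (Cartan's criterion: its Killing form is nondegenerate), the stabilizer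
`stab(τ) = {α ∈ so(V) : α_* τ = 0}` is exactly the set of skew-symmetric derivations of the
bracket, and every element of `stab(τ)` is inner, i.e. of the form `τ_X = B X`. -/
theorem stmt_19 {V : Type*} [NormedAddCommGroup V] [InnerProductSpace ℝ V]
    [FiniteDimensional ℝ V]
    (B : V →ₗ[ℝ] V →ₗ[ℝ] V)
    (halt1 : ∀ x y z, ⟪B x y, z⟫_ℝ = -⟪B y x, z⟫_ℝ)
    (halt2 : ∀ x y z, ⟪B x y, z⟫_ℝ = -⟪B x z, y⟫_ℝ)
    (hjac : ∀ x y z, B x (B y z) + B y (B z x) + B z (B x y) = 0)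
    (hker : ∀ x : V, (∀ y : V, B x y = 0) → x = 0) :
    -- semisimplicity: the Killing form K(x,y) = tr(ad x ∘ ad y) is nondegenerate
    (∀ x : V, (∀ y : V, LinearMap.trace ℝ V ((B x : Module.End ℝ V) ∘ₗ (B y)) = 0) →
      x = 0)
    -- stab(τ) = skew-symmetric derivations
    ∧ (∀ A : Module.End ℝ V, (∀ v w, ⟪A v, w⟫_ℝ = -⟪v, A w⟫_ℝ) →
        ((∀ y z w, ⟪B (A y) z, w⟫_ℝ + ⟪B y (A z), w⟫_ℝ + ⟪B y z, A w⟫_ℝ = 0)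
          ↔ (∀ x y, A (B x y) = B (A x) y + B x (A y))))
    -- stab(τ) = g_τ: every stabilizer element is of the form τ_X
    ∧ (∀ A : Module.End ℝ V, (∀ v w, ⟪A v, w⟫_ℝ = -⟪v, A w⟫_ℝ) →
        (∀ y z w, ⟪B (A y) z, w⟫_ℝ + ⟪B y (A z), w⟫_ℝ + ⟪B y z, A w⟫_ℝ = 0) →
        ∃ x : V, ∀ v, A v = B x v) := by
  classical
  -- antisymmetry of B
  have hBanti : ∀ x y, B x y = - B y x := by
    intro x y
    have h : B x y + B y x = 0 := by
      apply inner_all_zero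
      intro w
      rw [inner_add_left, halt1 x y w]; ring
    exact eq_neg_of_add_eq_zero_left h
  -- Part 1: Killing form nondegenerate
  have h1 : ∀ x : V, (∀ y : V, LinearMap.trace ℝ V ((B x : Module.End ℝ V) ∘ₗ (B y)) = 0) →
      x = 0 := by
    intro x hx
    apply hker
    have hxx := hx x
    rw [trace_onb] at hxx
    set b := stdOrthonormalBasis ℝ V with hb
    have key : ∀ i, ⟪b i, ((B x : Module.End ℝ V) ∘ₗ (B x)) (b i)⟫_ℝ
        = -⟪B x (b i), B x (b i)⟫_ℝ := by
      intro i
      have h2 := halt2 x (b i) (B x (b i))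
      have hc : ⟪b i, B x (B x (b i))⟫_ℝ = ⟪B x (B x (b i)), b i⟫_ℝ := real_inner_comm _ _
      rw [LinearMap.comp_apply, hc]
      linarith
    rw [Finset.sum_congr rfl (fun i _ => key i)] at hxx
    have hsum : ∑ i, ⟪B x (b i), B x (b i)⟫_ℝ = 0 := by
      rw [Finset.sum_neg_distrib, neg_eq_zero] at hxx
      exact hxx
    have hz : ∀ i, B x (b i) = 0 := by
      intro i
      have hnn : ∀ j ∈ Finset.univ, (0:ℝ) ≤ ⟪B x (b j), B x (b j)⟫_ℝ :=
        fun j _ => real_inner_self_nonneg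
      exact inner_self_eq_zero.mp
        ((Finset.sum_eq_zero_iff_of_nonneg hnn).mp hsum i (Finset.mem_univ i))
    intro y
    have hB0 : B x = (0 : Module.End ℝ V) := by
      apply b.toBasis.ext
      intro i
      simpa using hz i
    rw [hB0]; rfl
  -- Part 2
  have h2 : ∀ A : Module.End ℝ V, (∀ v w, ⟪A v, w⟫_ℝ = -⟪v, A w⟫_ℝ) →
      ((∀ y z w, ⟪B (A y) z, w⟫_ℝ + ⟪B y (A z), w⟫_ℝ + ⟪B y z, A w⟫_ℝ = 0)
        ↔ (∀ x y, A (B x y) = B (A x) y + B x (A y))) := by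
    intro A hA
    constructor
    · intro h x y
      have key : ∀ w, ⟪A (B x y) - B (A x) y - B x (A y), w⟫_ℝ = 0 := by
        intro w
        have h1' := h x y w
        have h2' := hA (B x y) w
        simp only [inner_sub_left]
        linarith
      have h0 := inner_all_zero key
      rw [sub_sub, sub_eq_zero] at h0
      exact h0
    · intro h y z w
      have h1' := congrArg (fun v => ⟪v, w⟫_ℝ) (h y z)
      simp only [inner_add_left] at h1'
      have h2' := hA (B y z) w
      linarith
  refine ⟨h1, h2, ?_⟩
  -- Part 3
  intro A hA hstab
  have hAder : ∀ x y, A (B x y) = B (A x) y + B x (A y) := (h2 A hA).mp hstab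
  -- ad x is a derivation (Jacobi)
  have hBder : ∀ x y z, B x (B y z) = B (B x y) z + B y (B x z) := by
    intro x y z
    have hj := hjac x y z
    rw [hBanti z x, map_neg, hBanti z (B x y)] at hj
    apply eq_of_sub_eq_zero
    rw [← hj]; abel
  -- ad (B y z) = [ad y, ad z]
  have hadbr : ∀ y z, (B (B y z) : Module.End ℝ V)
      = (B y : Module.End ℝ V) * B z - (B z : Module.End ℝ V) * B y := by
    intro y z
    ext w
    simp only [LinearMap.sub_apply, Module.End.mul_apply]
    have hj := hjac y z w
    rw [hBanti w y, map_neg, hBanti w (B y z)] at hj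
    symm
    apply eq_of_sub_eq_zero
    rw [← hj]; abel
  -- the linear functional y ↦ tr (A ∘ B y)
  let tA : Module.Dual ℝ V :=
    { toFun := fun y => LinearMap.trace ℝ V ((A : Module.End ℝ V) ∘ₗ B y)
      map_add' := by intro y z; simp only [map_add, LinearMap.comp_add]
      map_smul' := by intro c y; simp only [map_smul, LinearMap.comp_smul, RingHom.id_apply] }
  -- the Killing map Φ : V →ₗ Dual V
  let Φ : V →ₗ[ℝ] Module.Dual ℝ V :=
    { toFun := fun x =>
        { toFun := fun y => LinearMap.trace ℝ V ((B x : Module.End ℝ V) ∘ₗ B y)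
          map_add' := by intro y z; simp only [map_add, LinearMap.comp_add]
          map_smul' := by intro c y; simp only [map_smul, LinearMap.comp_smul, RingHom.id_apply] }
      map_add' := by
        intro x y; ext z
        simp only [LinearMap.coe_mk, AddHom.coe_mk, LinearMap.add_apply]
        simp only [map_add, LinearMap.add_comp]
      map_smul' := by
        intro c x; ext z
        simp only [LinearMap.coe_mk, AddHom.coe_mk, LinearMap.smul_apply, RingHom.id_apply]
        simp only [map_smul, LinearMap.smul_comp] }
  have hΦinj : Function.Injective Φ := by
    rw [← LinearMap.ker_eq_bot, LinearMap.ker_eq_bot']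
    intro x hx
    apply h1
    intro y
    simpa [Φ] using LinearMap.congr_fun hx y
  have hΦsurj : Function.Surjective Φ :=
    (LinearMap.injective_iff_surjective_of_finrank_eq_finrank
      Subspace.dual_finrank_eq.symm).mp hΦinj
  obtain ⟨x, hx⟩ := hΦsurj tA
  refine ⟨x, ?_⟩
  -- E := A - ad x
  set E : Module.End ℝ V := A - B x with hE
  have hEtr : ∀ y, LinearMap.trace ℝ V (E ∘ₗ B y) = 0 := by
    intro y
    have hxy : LinearMap.trace ℝ V ((B x : Module.End ℝ V) ∘ₗ B y)
        = LinearMap.trace ℝ V ((A : Module.End ℝ V) ∘ₗ B y) := LinearMap.congr_fun hx y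
    rw [hE, LinearMap.sub_comp, map_sub, hxy]
    ring
  -- E is a derivation
  have hEder : ∀ y z, E (B y z) = B (E y) z + B y (E z) := by
    intro y z
    simp only [hE, LinearMap.sub_apply, map_sub, hAder y z, hBder x y z]
    abel
  -- ad (E y) = [E, ad y]
  have hEcomm : ∀ y, (B (E y) : Module.End ℝ V) = E * B y - (B y : Module.End ℝ V) * E := by
    intro y
    ext z
    simp only [LinearMap.sub_apply, Module.End.mul_apply]
    exact eq_sub_of_add_eq (hEder y z).symm
  -- K(E y, z) = 0 for all z
  have hkill : ∀ y z, LinearMap.trace ℝ V ((B (E y) : Module.End ℝ V) ∘ₗ B z) = 0 := by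
    intro y z
    have step1 : (B (E y) : Module.End ℝ V) ∘ₗ B z
        = E * (B y : Module.End ℝ V) * B z - (B y : Module.End ℝ V) * E * B z := by
      rw [hEcomm y, LinearMap.sub_comp, ← Module.End.mul_eq_comp, ← Module.End.mul_eq_comp]
    rw [step1, map_sub]
    have cyc : LinearMap.trace ℝ V ((B y : Module.End ℝ V) * E * B z)
        = LinearMap.trace ℝ V (E * (B z : Module.End ℝ V) * B y) := by
      rw [mul_assoc, LinearMap.trace_mul_comm, mul_assoc]
    rw [cyc]
    have expand : E ∘ₗ B (B y z)
        = E * (B y : Module.End ℝ V) * B z - E * (B z : Module.End ℝ V) * B y := by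
      ext w
      simp only [LinearMap.comp_apply, hadbr y z, LinearMap.sub_apply, Module.End.mul_apply,
        map_sub]
    have htr0 := hEtr (B y z)
    rw [expand, map_sub] at htr0
    linarith
  intro v
  have hEv : E v = 0 := h1 (E v) (hkill v)
  rw [hE, LinearMap.sub_apply] at hEv
  exact sub_eq_zero.mp hEv
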